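/- Suppose that V attains its maximum over [0,1) exactly at the two points 0 and x₀ ∈ (0,1). Let j > 0 be such that α⁻(j) < 1 < α⁺(j). Then the set of pairs (d₁, d₂) ∈ (0, x₀) × (x₀, 1) satisfying ∫₀^{d₁} m⁻_j(x) dx + ∫_{d₁}^{x₀} m⁺_j(x) dx + ∫_{x₀}^{d₂} m⁻_j(x) dx + ∫_{d₂}^{1} m⁺_j(x) dx = 1 is infinite. -/

import Mathlib

open MeasureTheory

private lemma aux_cube (j : ℝ) (hj : 0 < j) : (j ^ ((2:ℝ)/3)) ^ 3 = j ^ 2 := by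
  have h : ((2:ℝ)/3) * ((3:ℕ):ℝ) = ((2:ℕ):ℝ) := by norm_num
  rw [← Real.rpow_natCast (j ^ ((2:ℝ)/3)) 3, ← Real.rpow_mul hj.le, h, Real.rpow_natCast]

private lemma aux_anti (j : ℝ) (hj : 0 < j) {s t : ℝ} (hs : 0 < s) (hst : s < t)
    (ht : t ≤ j ^ ((2:ℝ)/3)) :
    j ^ 2 / (2 * t ^ 2) + t < j ^ 2 / (2 * s ^ 2) + s := by
  have hc : 0 < j ^ ((2:ℝ)/3) := Real.rpow_pos_of_pos hj _
  have hc3 : (j ^ ((2:ℝ)/3)) ^ 3 = j ^ 2 := aux_cube j hj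
  have ht0 : 0 < t := hs.trans hst
  have ht3 : t ^ 3 ≤ j ^ 2 := by
    rw [← hc3]; exact pow_le_pow_left₀ ht0.le ht 3
  have key : 2 * s ^ 2 * t ^ 2 < j ^ 2 * (s + t) := by
    have h1 : 2 * s ^ 2 * t ^ 2 < 2 * s * t ^ 3 := by nlinarith [mul_lt_mul_of_pos_left hst (by positivity : (0:ℝ) < 2 * s * t ^ 2)]
    have h2 : 2 * s * t ^ 3 ≤ 2 * s * j ^ 2 := by nlinarith
    have h3 : 2 * s * j ^ 2 < j ^ 2 * (s + t) := by nlinarith [pow_pos hj 2]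
    linarith
  have h2s : (0:ℝ) < 2 * s ^ 2 := by positivity
  have h2t : (0:ℝ) < 2 * t ^ 2 := by positivity
  rw [div_add' _ _ _ h2t.ne', div_add' _ _ _ h2s.ne', div_lt_div_iff₀ h2t h2s]
  nlinarith [mul_pos (sub_pos.mpr hst) (sub_pos.mpr key)]

private lemma aux_mono (j : ℝ) (hj : 0 < j) {s t : ℝ} (hs : j ^ ((2:ℝ)/3) ≤ s)
    (hst : s < t) :
    j ^ 2 / (2 * s ^ 2) + s < j ^ 2 / (2 * t ^ 2) + t := by
  have hc : 0 < j ^ ((2:ℝ)/3) := Real.rpow_pos_of_pos hj _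
  have hc3 : (j ^ ((2:ℝ)/3)) ^ 3 = j ^ 2 := aux_cube j hj
  have hs0 : 0 < s := hc.trans_le hs
  have ht0 : 0 < t := hs0.trans hst
  have hj2s : j ^ 2 ≤ s ^ 3 := by
    rw [← hc3]; exact pow_le_pow_left₀ hc.le hs 3
  have key : j ^ 2 * (s + t) < 2 * s ^ 2 * t ^ 2 := by
    have h1 : j ^ 2 * (s + t) < j ^ 2 * (2 * t) := by nlinarith [pow_pos hj 2]
    have h2 : j ^ 2 * (2 * t) ≤ s ^ 3 * (2 * t) := by nlinarith
    have h3 : s ^ 3 * (2 * t) ≤ 2 * s ^ 2 * t ^ 2 := by nlinarith [mul_pos (mul_pos hs0 hs0) ht0]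
    linarith
  have h2s : (0:ℝ) < 2 * s ^ 2 := by positivity
  have h2t : (0:ℝ) < 2 * t ^ 2 := by positivity
  rw [div_add' _ _ _ h2s.ne', div_add' _ _ _ h2t.ne', div_lt_div_iff₀ h2s h2t]
  nlinarith [mul_pos (sub_pos.mpr hst) (sub_pos.mpr key)]

private lemma aux_integrableOn {g : ℝ → ℝ} (hg : Measurable g) {B : ℝ}
    (hB : ∀ x, |g x| ≤ B) (a b : ℝ) :
    IntegrableOn g (Set.uIcc a b) MeasureTheory.volume := by
  have hfin : MeasureTheory.volume (Set.uIcc a b) < ⊤ := measure_Icc_lt_top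
  refine Integrable.mono (g := fun _ => B)
    (integrableOn_const hfin.ne) hg.aestronglyMeasurable.restrict ?_
  filter_upwards with x
  rw [Real.norm_eq_abs, Real.norm_eq_abs]
  exact (hB x).trans (le_abs_self B)

private lemma aux_intervalIntegrable {g : ℝ → ℝ} (hg : Measurable g) {B : ℝ}
    (hB : ∀ x, |g x| ≤ B) (a b : ℝ) :
    IntervalIntegrable g MeasureTheory.volume a b :=
  (aux_integrableOn hg hB a b).intervalIntegrable

/-- if `V` attains its maximum on `[0,1)` exactly at `0` and at
`x₀ ∈ (0,1)`, and `α⁻(j) < 1 < α⁺(j)`, then there are infinitely many pairs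
`(d₁, d₂) ∈ (0,x₀) × (x₀,1)` for which the corresponding two-jump density built
from the branches `m⁻_j, m⁺_j` has total mass one. -/
theorem stmt_8
    (V : ℝ → ℝ) (hVc : Continuous V) (hVp : Function.Periodic V 1)
    (M : ℝ) (hM : IsGreatest (Set.range V) M)
    (x₀ : ℝ) (hx₀ : x₀ ∈ Set.Ioo (0:ℝ) 1)
    (hV0 : V 0 = M) (hVx₀ : V x₀ = M)
    (hVuniq : ∀ x ∈ Set.Ico (0:ℝ) 1, V x = M → x = 0 ∨ x = x₀)
    (j : ℝ) (hj : 0 < j)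
    (mm mp : ℝ → ℝ)
    (hmm : ∀ x, 0 < mm x ∧ mm x ≤ j ^ ((2:ℝ)/3) ∧
      j ^ 2 / (2 * (mm x) ^ 2) + mm x = (M + 3 / 2 * j ^ ((2:ℝ)/3)) - V x)
    (hmp : ∀ x, j ^ ((2:ℝ)/3) ≤ mp x ∧
      j ^ 2 / (2 * (mp x) ^ 2) + mp x = (M + 3 / 2 * j ^ ((2:ℝ)/3)) - V x)
    (hαm : (∫ x in (0:ℝ)..1, mm x) < 1)
    (hαp : 1 < (∫ x in (0:ℝ)..1, mp x)) :
    {d : ℝ × ℝ | d.1 ∈ Set.Ioo 0 x₀ ∧ d.2 ∈ Set.Ioo x₀ 1 ∧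
      (∫ x in (0:ℝ)..d.1, mm x) + (∫ x in d.1..x₀, mp x) +
      (∫ x in x₀..d.2, mm x) + (∫ x in d.2..1, mp x) = 1}.Infinite := by
  set c := j ^ ((2:ℝ)/3) with hcdef
  have hc : 0 < c := Real.rpow_pos_of_pos hj _
  have hc3 : c ^ 3 = j ^ 2 := aux_cube j hj
  have hfc : j ^ 2 / (2 * c ^ 2) + c = 3 / 2 * c := by
    rw [← hc3]; field_simp; ring
  have hVle : ∀ x, V x ≤ M := fun x => hM.2 ⟨x, rfl⟩
  -- measurability of mm
  have hmm_meas : Measurable mm := by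
    set gm : ℝ → ℝ := fun v =>
      sInf ({c} ∪ {t | 0 < t ∧ t ≤ c ∧ j ^ 2 / (2 * t ^ 2) + t ≤ M + 3 / 2 * c - v}) with hgm
    have hgm_mono : Monotone gm := by
      intro v1 v2 h12
      apply csInf_le_csInf
      · refine ⟨0, ?_⟩; rintro t (rfl | ht); exacts [hc.le, ht.1.le]
      · exact ⟨c, Or.inl rfl⟩
      · rintro t (rfl | ht)
        · exact Or.inl rfl
        · exact Or.inr ⟨ht.1, ht.2.1, ht.2.2.trans (by linarith)⟩
    have hmm_eq : mm = fun x => gm (V x) := by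
      funext x
      obtain ⟨h1, h2, h3⟩ := hmm x
      refine le_antisymm ?_ (csInf_le ⟨0, ?_⟩ (Or.inr ⟨h1, h2, h3.le⟩))
      · apply le_csInf ⟨c, Or.inl rfl⟩
        rintro t (rfl | ⟨ht1, ht2, ht3⟩)
        · exact h2
        · by_contra hlt
          push_neg at hlt
          have hh := aux_anti j hj ht1 hlt h2
          rw [h3] at hh
          linarith
      · rintro t (rfl | ht); exacts [hc.le, ht.1.le]
    rw [hmm_eq]
    exact hgm_mono.measurable.comp hVc.measurable
  -- measurability of mp
  have hmp_meas : Measurable mp := by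
    set gp : ℝ → ℝ := fun v =>
      sInf {t | c ≤ t ∧ M + 3 / 2 * c - v ≤ j ^ 2 / (2 * t ^ 2) + t} with hgp
    have hgp_ne : ∀ v, Set.Nonempty {t | c ≤ t ∧ M + 3 / 2 * c - v ≤ j ^ 2 / (2 * t ^ 2) + t} := by
      intro v
      refine ⟨max c (M + 3 / 2 * c - v), le_max_left _ _, ?_⟩
      have h1 : M + 3 / 2 * c - v ≤ max c (M + 3 / 2 * c - v) := le_max_right _ _
      have h2 : 0 ≤ j ^ 2 / (2 * (max c (M + 3 / 2 * c - v)) ^ 2) := by positivity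
      linarith
    have hgp_anti : Antitone gp := by
      intro v1 v2 h12
      apply csInf_le_csInf ⟨c, fun t ht => ht.1⟩ (hgp_ne v1)
      rintro t ⟨ht1, ht2⟩
      exact ⟨ht1, by linarith⟩
    have hmp_eq : mp = fun x => gp (V x) := by
      funext x
      obtain ⟨h1, h2⟩ := hmp x
      refine le_antisymm (le_csInf (hgp_ne _) ?_) (csInf_le ⟨c, fun t ht => ht.1⟩ ⟨h1, h2.ge⟩)
      rintro t ⟨ht1, ht2⟩
      by_contra hlt
      push_neg at hlt
      have hh := aux_mono j hj ht1 hlt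
      rw [h2] at hh
      linarith
    rw [hmp_eq]
    exact hgp_anti.measurable.comp hVc.measurable
  -- lower bound for V
  obtain ⟨z, hzmem, hzmin⟩ :=
    isCompact_Icc.exists_isMinOn (Set.nonempty_Icc.mpr zero_le_one) hVc.continuousOn
  have hVlow : ∀ x, V z ≤ V x := by
    intro x
    have h1 : V (x - (⌊x⌋ : ℝ) * 1) = V x := hVp.sub_int_mul_eq ⌊x⌋
    have h2 : x - (⌊x⌋ : ℝ) * 1 ∈ Set.Icc (0:ℝ) 1 := by
      constructor
      · have := Int.floor_le x; linarith
      · have := Int.lt_floor_add_one x; linarith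
    calc V z ≤ V (x - (⌊x⌋ : ℝ) * 1) := hzmin h2
    _ = V x := h1
  -- bounds
  have hmmB : ∀ x, |mm x| ≤ c := by
    intro x
    obtain ⟨h1, h2, _⟩ := hmm x
    rw [abs_of_pos h1]; exact h2
  have hmpB : ∀ x, |mp x| ≤ M + 3 / 2 * c - V z := by
    intro x
    obtain ⟨h1, h2⟩ := hmp x
    have h0 : 0 ≤ j ^ 2 / (2 * (mp x) ^ 2) := by positivity
    rw [abs_of_nonneg (hc.le.trans h1)]
    have := hVlow x
    linarith
  have hFB : ∀ x, |mm x - mp x| ≤ c + (M + 3 / 2 * c - V z) := fun x =>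
    (abs_sub (mm x) (mp x)).trans (add_le_add (hmmB x) (hmpB x))
  have hmmI : ∀ a b : ℝ, IntervalIntegrable mm volume a b :=
    aux_intervalIntegrable hmm_meas hmmB
  have hmpI : ∀ a b : ℝ, IntervalIntegrable mp volume a b :=
    aux_intervalIntegrable hmp_meas hmpB
  have hF_meas : Measurable (fun x => mm x - mp x) := hmm_meas.sub hmp_meas
  have hFI : ∀ a b : ℝ, IntervalIntegrable (fun x => mm x - mp x) volume a b :=
    aux_intervalIntegrable hF_meas hFB
  -- strict negativity of mm - mp away from max points
  have hVlt : ∀ x, 0 < x → x < 1 → x ≠ x₀ → V x < M := by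
    intro x h0 h1 hne
    rcases lt_or_eq_of_le (hVle x) with h | h
    · exact h
    · rcases hVuniq x ⟨h0.le, h1⟩ h with h' | h'
      · exact absurd h' h0.ne'
      · exact absurd h' hne
  have hFneg : ∀ x, 0 < x → x < 1 → x ≠ x₀ → mm x - mp x < 0 := by
    intro x h0 h1 hne
    have hVx := hVlt x h0 h1 hne
    obtain ⟨hm1, hm2, hm3⟩ := hmm x
    have hmmlt : mm x < c := by
      rcases lt_or_eq_of_le hm2 with h | h
      · exact h
      · exfalso; rw [h, hfc] at hm3; linarith
    have := (hmp x).1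
    linarith
  -- the primitives
  set Φ : ℝ → ℝ := fun d => ∫ x in (0:ℝ)..d, (mm x - mp x) with hΦdef
  set Ψ : ℝ → ℝ := fun d => ∫ x in x₀..d, (mm x - mp x) with hΨdef
  set A : ℝ := ∫ x in (0:ℝ)..1, mp x with hAdef
  have hrw : ∀ d₁ d₂ : ℝ,
      (∫ x in (0:ℝ)..d₁, mm x) + (∫ x in d₁..x₀, mp x) +
      (∫ x in x₀..d₂, mm x) + (∫ x in d₂..1, mp x) = A + Φ d₁ + Ψ d₂ := by
    intro d₁ d₂
    have e1 : Φ d₁ = (∫ x in (0:ℝ)..d₁, mm x) - ∫ x in (0:ℝ)..d₁, mp x :=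
      intervalIntegral.integral_sub (hmmI 0 d₁) (hmpI 0 d₁)
    have e2 : Ψ d₂ = (∫ x in x₀..d₂, mm x) - ∫ x in x₀..d₂, mp x :=
      intervalIntegral.integral_sub (hmmI _ _) (hmpI _ _)
    have e3 : (∫ x in (0:ℝ)..d₁, mp x) + (∫ x in d₁..x₀, mp x) = ∫ x in (0:ℝ)..x₀, mp x :=
      intervalIntegral.integral_add_adjacent_intervals (hmpI _ _) (hmpI _ _)
    have e4 : (∫ x in (0:ℝ)..x₀, mp x) + (∫ x in x₀..d₂, mp x) = ∫ x in (0:ℝ)..d₂, mp x :=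
      intervalIntegral.integral_add_adjacent_intervals (hmpI _ _) (hmpI _ _)
    have e5 : (∫ x in (0:ℝ)..d₂, mp x) + (∫ x in d₂..1, mp x) = A :=
      intervalIntegral.integral_add_adjacent_intervals (hmpI _ _) (hmpI _ _)
    linarith
  have hΨ0 : Ψ x₀ = 0 := intervalIntegral.integral_same
  have hΦ0 : Φ 0 = 0 := intervalIntegral.integral_same
  have hΨ1 : Ψ 1 < 0 := by
    have h := intervalIntegral.intervalIntegral_pos_of_pos_on (f := fun x => -(mm x - mp x)) ((hFI x₀ 1).neg)
      (fun x hx => by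
        have := hFneg x (hx₀.1.trans hx.1) hx.2 (ne_of_gt hx.1)
        linarith) hx₀.2
    rw [intervalIntegral.integral_neg] at h
    simpa [hΨdef] using h
  have hΦanti : ∀ a b : ℝ, 0 ≤ a → a < b → b ≤ x₀ → Φ b < Φ a := by
    intro a b ha hab hb
    have e : Φ a + ∫ x in a..b, (mm x - mp x) = Φ b :=
      intervalIntegral.integral_add_adjacent_intervals (hFI _ _) (hFI _ _)
    have h := intervalIntegral.intervalIntegral_pos_of_pos_on (f := fun x => -(mm x - mp x)) ((hFI a b).neg)
      (fun x hx => by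
        have hx1 : x < x₀ := lt_of_lt_of_le hx.2 hb
        have := hFneg x (lt_of_le_of_lt ha hx.1) (hx1.trans hx₀.2) (ne_of_lt hx1)
        linarith) hab
    rw [intervalIntegral.integral_neg] at h
    linarith
  have huIcc1 : Set.uIcc (0:ℝ) x₀ = Set.Icc 0 x₀ := Set.uIcc_of_le hx₀.1.le
  have huIcc2 : Set.uIcc x₀ (1:ℝ) = Set.Icc x₀ 1 := Set.uIcc_of_le hx₀.2.le
  have hΦcont : ContinuousOn Φ (Set.Icc 0 x₀) := by
    have h := intervalIntegral.continuousOn_primitive_interval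
      (a := (0:ℝ)) (b := x₀) (μ := volume) (f := fun x => mm x - mp x)
      (aux_integrableOn hF_meas hFB 0 x₀)
    rwa [huIcc1] at h
  have hΨcont : ContinuousOn Ψ (Set.Icc x₀ 1) := by
    have h := intervalIntegral.continuousOn_primitive_interval
      (a := x₀) (b := (1:ℝ)) (μ := volume) (f := fun x => mm x - mp x)
      (aux_integrableOn hF_meas hFB x₀ 1)
    rwa [huIcc2] at h
  -- relation with α⁻
  have e6 : Φ x₀ + Ψ 1 = ∫ x in (0:ℝ)..1, (mm x - mp x) :=
    intervalIntegral.integral_add_adjacent_intervals (hFI _ _) (hFI _ _)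
  have e7 : (∫ x in (0:ℝ)..1, (mm x - mp x)) = (∫ x in (0:ℝ)..1, mm x) - A :=
    intervalIntegral.integral_sub (hmmI _ _) (hmpI _ _)
  have hΦx₀ : Φ x₀ < 1 - A - Ψ 1 := by linarith
  have hA1 : 1 - A < 0 := by linarith
  -- find the pivot d'
  obtain ⟨d', hd'le, hd'pos, hd'val, hd'lower⟩ :
      ∃ d', d' ≤ x₀ ∧ 0 < d' ∧ Φ d' < 1 - A - Ψ 1 ∧ ∀ d ∈ Set.Ioo 0 d', 1 - A < Φ d := by
    rcases le_or_gt (1 - A) (Φ x₀) with h | h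
    · exact ⟨x₀, le_refl _, hx₀.1, hΦx₀,
        fun d hd => lt_of_le_of_lt h (hΦanti d x₀ hd.1.le hd.2 le_rfl)⟩
    · have hsub := intermediate_value_Icc' hx₀.1.le hΦcont
      have hmem : (1 - A) ∈ Set.Icc (Φ x₀) (Φ 0) := ⟨h.le, by rw [hΦ0]; linarith⟩
      obtain ⟨d', hd'm, hd'v⟩ := hsub hmem
      have hd'0 : 0 < d' := by
        rcases eq_or_lt_of_le hd'm.1 with h0 | h0
        · exfalso; rw [← h0, hΦ0] at hd'v; linarith
        · exact h0
      refine ⟨d', hd'm.2, hd'0, by rw [hd'v]; linarith, ?_⟩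
      intro d hd
      have := hΦanti d d' hd.1.le hd.2 hd'm.2
      rw [hd'v] at this
      linarith
  -- continuity at d' within Icc 0 x₀ gives a margin δ
  have hcΦ : ContinuousWithinAt Φ (Set.Icc 0 x₀) d' := hΦcont d' ⟨hd'pos.le, hd'le⟩
  rw [Metric.continuousWithinAt_iff] at hcΦ
  obtain ⟨δ, hδpos, hδ⟩ := hcΦ ((1 - A - Ψ 1) - Φ d') (by linarith)
  set a' : ℝ := max (d' - δ) (d' / 2) with ha'def
  have ha'lt : a' < d' := max_lt (by linarith) (by linarith)
  have ha'pos : 0 < a' := lt_of_lt_of_le (by linarith : (0:ℝ) < d' / 2) (le_max_right _ _)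
  -- every d in (a', d') extends to a solution pair
  have key : ∀ d ∈ Set.Ioo a' d', ∃ d₂ : ℝ, ((d, d₂) : ℝ × ℝ) ∈
      {d : ℝ × ℝ | d.1 ∈ Set.Ioo 0 x₀ ∧ d.2 ∈ Set.Ioo x₀ 1 ∧
        (∫ x in (0:ℝ)..d.1, mm x) + (∫ x in d.1..x₀, mp x) +
        (∫ x in x₀..d.2, mm x) + (∫ x in d.2..1, mp x) = 1} := by
    intro d hd
    have hd0 : 0 < d := ha'pos.trans hd.1
    have hdx₀ : d < x₀ := lt_of_lt_of_le hd.2 hd'le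
    have hΦd_gt : 1 - A < Φ d := hd'lower d ⟨hd0, hd.2⟩
    have hΦd_lt : Φ d < 1 - A - Ψ 1 := by
      have hmemIcc : d ∈ Set.Icc (0:ℝ) x₀ := ⟨hd0.le, hdx₀.le⟩
      have hge : d' - δ ≤ a' := le_max_left _ _
      have hdist : dist d d' < δ := by
        rw [Real.dist_eq, abs_of_neg (by linarith [hd.2] : d - d' < 0)]
        linarith [hd.1]
      have h := hδ hmemIcc hdist
      rw [Real.dist_eq] at h
      have h2 := (abs_lt.mp h).2
      linarith
    have hsub := intermediate_value_Icc' hx₀.2.le hΨcont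
    have hmem : (1 - A - Φ d) ∈ Set.Icc (Ψ 1) (Ψ x₀) := ⟨by linarith, by rw [hΨ0]; linarith⟩
    obtain ⟨d₂, hd₂m, hd₂v⟩ := hsub hmem
    have h1 : d₂ ≠ x₀ := by intro he; rw [he, hΨ0] at hd₂v; linarith
    have h2 : d₂ ≠ 1 := by intro he; rw [he] at hd₂v; linarith
    refine ⟨d₂, ⟨hd0, hdx₀⟩, ⟨lt_of_le_of_ne hd₂m.1 (Ne.symm h1), lt_of_le_of_ne hd₂m.2 h2⟩, ?_⟩
    rw [hrw d d₂, hd₂v]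
    ring
  -- conclusion
  by_contra hfin
  rw [Set.not_infinite] at hfin
  have hTsub : Set.Ioo a' d' ⊆ Prod.fst ''
      {d : ℝ × ℝ | d.1 ∈ Set.Ioo 0 x₀ ∧ d.2 ∈ Set.Ioo x₀ 1 ∧
        (∫ x in (0:ℝ)..d.1, mm x) + (∫ x in d.1..x₀, mp x) +
        (∫ x in x₀..d.2, mm x) + (∫ x in d.2..1, mp x) = 1} := by
    intro d hd
    obtain ⟨d₂, hmem⟩ := key d hd
    exact ⟨(d, d₂), hmem, rfl⟩
  exact (Set.Ioo_infinite ha'lt) (Set.Finite.subset (hfin.image Prod.fst) hTsub)
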